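/- For any two stochastic policies π and π' on a finite ergodic MDP, ρ(π') − ρ(π) ≥ E_{s∼d_π, a∼π'}[Ā^π(s,a)] − 2ξ·E_{s∼d_π}[D_TV(π'∥π)[s]] and ρ(π') − ρ(π) ≤ E_{s∼d_π, a∼π'}[Ā^π(s,a)] + 2ξ·E_{s∼d_π}[D_TV(π'∥π)[s]], where ξ = (κ* − 1)·max_s E_{a∼π'}|Ā^π(s,a)| and κ* is the maximal Kemeny constant over all stationary policies. -/

import Mathlib

open Finset

/-- A stochastic policy. -/
def IsPolicy {S A : Type*} [Fintype A] (π : S → A → ℝ) : Prop :=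
  (∀ s a, 0 ≤ π s a) ∧ ∀ s, ∑ a, π s a = 1

/-- State transition matrix induced by policy π. -/
def inducedMatrix {S A : Type*} [Fintype A] (P : S → A → S → ℝ) (π : S → A → ℝ) :
    Matrix S S ℝ :=
  Matrix.of fun s s' => ∑ a, π s a * P s a s'

/-- Fundamental matrix Z = (I − P_π + P*_π)⁻¹ where P*_π = 1 d_π^T. -/
noncomputable def fundMatrix {S : Type*} [Fintype S] [DecidableEq S]
    (Pm : Matrix S S ℝ) (d : S → ℝ) : Matrix S S ℝ :=
  (1 - Pm + Matrix.of fun _ s' => d s')⁻¹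

/-- Kemeny's constant κ^π = tr((I − P_π + P*_π)⁻¹). -/
noncomputable def kemeny {S : Type*} [Fintype S] [DecidableEq S]
    (Pm : Matrix S S ℝ) (d : S → ℝ) : ℝ :=
  (fundMatrix Pm d).trace

/-- Stationary distribution of the chain induced by a policy. -/
def IsStationaryDist {S A : Type*} [Fintype S] [Fintype A]
    (P : S → A → S → ℝ) (π : S → A → ℝ) (d : S → ℝ) : Prop :=
  (∀ s, 0 < d s) ∧ (∑ s, d s = 1) ∧
    ∀ s', ∑ s, d s * ∑ a, π s a * P s a s' = d s'

/-- the average-reward policy improvement bounds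
  ρ(π') − ρ(π) ≥ E_{s∼d_π, a∼π'}[Ā^π(s,a)] − 2ξ·E_{s∼d_π}[D_TV(π'∥π)[s]] and
  ρ(π') − ρ(π) ≤ E_{s∼d_π, a∼π'}[Ā^π(s,a)] + 2ξ·E_{s∼d_π}[D_TV(π'∥π)[s]],
with ξ = (κ* − 1)·max_s E_{a∼π'}|Ā^π(s,a)|. -/
theorem avg_reward_policy_improvement_bound
    {S A : Type*} [Fintype S] [Fintype A] [DecidableEq S] [Nonempty S]
    (P : S → A → S → ℝ) (r : S → A → ℝ)
    (hP_nonneg : ∀ s a s', 0 ≤ P s a s') (hP_sum : ∀ s a, ∑ s', P s a s' = 1)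
    (π π' : S → A → ℝ) (hπ : IsPolicy π) (hπ' : IsPolicy π')
    (dπ dπ' : S → ℝ)
    (hd : IsStationaryDist P π dπ) (hd' : IsStationaryDist P π' dπ')
    -- fundamental matrices exist (irreducible aperiodic chains)
    (hZ : ∀ p d, IsPolicy p → IsStationaryDist P p d →
      IsUnit (1 - inducedMatrix P p + Matrix.of fun _ s' => d s' : Matrix S S ℝ))
    -- average rewards
    (ρπ ρπ' : ℝ)
    (hρ : ρπ = ∑ s, dπ s * ∑ a, π s a * r s a)
    (hρ' : ρπ' = ∑ s, dπ' s * ∑ a, π' s a * r s a)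
    -- bias, action-bias and advantage functions of π
    (Vb : S → ℝ) (Qb Ab : S → A → ℝ)
    (hBellman : ∀ s a, Qb s a = r s a - ρπ + ∑ s', P s a s' * Vb s')
    (hAdv : ∀ s a, Ab s a = Qb s a - Vb s)
    -- κ* = max_π κ^π, the maximal Kemeny constant over stationary policies
    (κstar : ℝ)
    (hκ_ub : ∀ p d, IsPolicy p → IsStationaryDist P p d →
      kemeny (inducedMatrix P p) d ≤ κstar)
    (hκ_mem : ∃ p d, IsPolicy p ∧ IsStationaryDist P p d ∧
      kemeny (inducedMatrix P p) d = κstar)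
    -- ξ = (κ* − 1)·max_s E_{a∼π'}|Ā^π(s,a)|
    (ξ : ℝ)
    (hξ : ξ = (κstar - 1) *
      Finset.univ.sup' Finset.univ_nonempty (fun s => ∑ a, π' s a * |Ab s a|)) :
    ρπ' - ρπ ≥ (∑ s, dπ s * ∑ a, π' s a * Ab s a) -
        2 * ξ * ∑ s, dπ s * ((1 / 2) * ∑ a, |π' s a - π s a|) ∧
    ρπ' - ρπ ≤ (∑ s, dπ s * ∑ a, π' s a * Ab s a) +
        2 * ξ * ∑ s, dπ s * ((1 / 2) * ∑ a, |π' s a - π s a|) := by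
  
  classical
  obtain ⟨hπ0, hπ1⟩ := hπ
  obtain ⟨hπ'0, hπ'1⟩ := hπ'
  obtain ⟨hd0, hd1, hdstat⟩ := hd
  obtain ⟨hd'0, hd'1, hd'stat⟩ := hd'
  -- notation
  set g : S → ℝ := fun s => ∑ a, π' s a * Ab s a with hgdef
  set M₀ : ℝ := Finset.univ.sup' Finset.univ_nonempty
      (fun s => ∑ a, π' s a * |Ab s a|) with hM0def
  set Pm' : Matrix S S ℝ := inducedMatrix P π' with hPdef
  set M' : Matrix S S ℝ := 1 - Pm' + Matrix.of fun _ s' => dπ' s' with hMdef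
  set Z : Matrix S S ℝ := fundMatrix Pm' dπ' with hZdef
  set X : ℝ := ∑ s, dπ s * ∑ a, |π' s a - π s a| with hXdef
  have hPm'app : ∀ i j, Pm' i j = ∑ a, π' i a * P i a j := fun i j => rfl
  have hPm'0 : ∀ i j, (0:ℝ) ≤ Pm' i j := fun i j =>
    Finset.sum_nonneg fun a _ => mul_nonneg (hπ'0 i a) (hP_nonneg i a j)
  have hPm'row : ∀ i, ∑ j, Pm' i j = 1 := by
    intro i
    rw [show (∑ j, Pm' i j) = ∑ j, ∑ a, π' i a * P i a j from rfl, Finset.sum_comm]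
    simp only [← Finset.mul_sum, hP_sum, mul_one, hπ'1]
  have hstat' : ∀ j, ∑ i, dπ' i * Pm' i j = dπ' j := fun j => hd'stat j
  have hstatπ : ∀ j, ∑ i, dπ i * (inducedMatrix P π) i j = dπ j := fun j => hdstat j
  -- fundamental matrix facts
  have hMunit : IsUnit M' := hZ π' dπ' ⟨hπ'0, hπ'1⟩ ⟨hd'0, hd'1, hd'stat⟩
  have hMdet : IsUnit M'.det := (Matrix.isUnit_iff_isUnit_det M').mp hMunit
  have hZinv : Z = M'⁻¹ := by rw [hZdef, hMdef, fundMatrix]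
  have hMZ : M' * Z = 1 := by rw [hZinv]; exact Matrix.mul_nonsing_inv M' hMdet
  have hZM : Z * M' = 1 := by rw [hZinv]; exact Matrix.nonsing_inv_mul M' hMdet
  have hM'app : ∀ i j, M' i j = (if i = j then (1:ℝ) else 0) - Pm' i j + dπ' j := by
    intro i j
    rw [hMdef]
    simp [Matrix.add_apply, Matrix.sub_apply, Matrix.one_apply]
  have hMZapp : ∀ i j, ∑ k, M' i k * Z k j = if i = j then (1:ℝ) else 0 := by
    intro i j
    have := congrArg (fun A => A i j) hMZ
    simpa [Matrix.mul_apply, Matrix.one_apply] using this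
  have hZMapp : ∀ i j, ∑ k, Z i k * M' k j = if i = j then (1:ℝ) else 0 := by
    intro i j
    have := congrArg (fun A => A i j) hZM
    simpa [Matrix.mul_apply, Matrix.one_apply] using this
  have hM'row : ∀ i, ∑ j, M' i j = 1 := by
    intro i
    simp only [hM'app]
    rw [Finset.sum_add_distrib, Finset.sum_sub_distrib, hPm'row, hd'1,
      Finset.sum_ite_eq univ i (fun _ => (1:ℝ))]
    simp
  -- rows of Z sum to 1
  have hZrow : ∀ i, ∑ j, Z i j = 1 := by
    intro i
    have h1 : (1:ℝ) = ∑ j, ∑ k, Z i k * M' k j := by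
      simp only [hZMapp]
      rw [Finset.sum_ite_eq univ i (fun _ => (1:ℝ))]
      simp
    rw [h1, Finset.sum_comm]
    apply Finset.sum_congr rfl
    intro k _
    rw [← Finset.mul_sum, hM'row, mul_one]
  -- column relation: dπ' is a left fixed vector of Z
  have hd'M' : ∀ i, ∑ k, dπ' k * M' k i = dπ' i := by
    intro i
    simp only [hM'app, mul_add, mul_sub]
    rw [Finset.sum_add_distrib, Finset.sum_sub_distrib, hstat', ← Finset.sum_mul, hd'1]
    have : ∑ k, dπ' k * (if k = i then (1:ℝ) else 0) = dπ' i := by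
      simp [Finset.sum_ite_eq']
    rw [this]
    ring
  have hZcol : ∀ j, ∑ i, dπ' i * Z i j = dπ' j := by
    intro j
    have h1 : dπ' j = ∑ k, dπ' k * (if k = j then (1:ℝ) else 0) := by
      simp [Finset.sum_ite_eq']
    rw [h1]
    symm
    calc ∑ k, dπ' k * (if k = j then (1:ℝ) else 0)
        = ∑ k, dπ' k * ∑ i, M' k i * Z i j := by
          apply Finset.sum_congr rfl; intro k _; rw [hMZapp]
      _ = ∑ k, ∑ i, dπ' k * M' k i * Z i j := by
          apply Finset.sum_congr rfl; intro k _; rw [Finset.mul_sum]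
          apply Finset.sum_congr rfl; intro i _; ring
      _ = ∑ i, ∑ k, dπ' k * M' k i * Z i j := Finset.sum_comm
      _ = ∑ i, dπ' i * Z i j := by
          apply Finset.sum_congr rfl; intro i _
          rw [← Finset.sum_mul, hd'M']
  -- maximum principle: columns of Z are maximized on the diagonal
  have hkey : ∀ i j, Z i j = (if i = j then (1:ℝ) else 0) - dπ' j + ∑ k, Pm' i k * Z k j := by
    intro i j
    have h1 := hMZapp i j
    simp only [hM'app, sub_mul, add_mul] at h1
    rw [Finset.sum_add_distrib, Finset.sum_sub_distrib] at h1
    have h2 : ∑ k, (if i = k then (1:ℝ) else 0) * Z k j = Z i j := by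
      simp [Finset.sum_ite_eq]
    have h3 : ∑ k, dπ' k * Z k j = dπ' j := hZcol j
    rw [h2, h3] at h1
    linarith
  have hmaxp : ∀ j i, Z i j ≤ Z j j := by
    intro j
    obtain ⟨i₀, -, hi₀⟩ := Finset.exists_max_image Finset.univ (fun i => Z i j)
      Finset.univ_nonempty
    have hi₀j : Z i₀ j ≤ Z j j := by
      by_cases h : i₀ = j
      · rw [h]
      · exfalso
        have h1 := hkey i₀ j
        rw [if_neg h] at h1
        have h2 : ∑ k, Pm' i₀ k * Z k j ≤ ∑ k, Pm' i₀ k * Z i₀ j := by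
          apply Finset.sum_le_sum
          intro k _
          exact mul_le_mul_of_nonneg_left (hi₀ k (Finset.mem_univ k)) (hPm'0 i₀ k)
        rw [← Finset.sum_mul, hPm'row, one_mul] at h2
        have := hd'0 j
        linarith
    intro i
    exact le_trans (hi₀ i (Finset.mem_univ i)) hi₀j
  have hdiag : ∀ j, dπ' j ≤ Z j j := by
    intro j
    have h1 : ∑ i, dπ' i * Z i j ≤ ∑ i, dπ' i * Z j j := by
      apply Finset.sum_le_sum
      intro i _
      exact mul_le_mul_of_nonneg_left (hmaxp j i) (le_of_lt (hd'0 i))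
    rw [hZcol, ← Finset.sum_mul, hd'1, one_mul] at h1
    exact h1
  have htr : Z.trace = ∑ j, Z j j := rfl
  have hκpos : (0:ℝ) ≤ Z.trace - 1 := by
    rw [htr, ← hd'1]
    rw [← Finset.sum_sub_distrib]
    exact Finset.sum_nonneg fun j _ => by linarith [hdiag j]
  have hrowdiff : ∀ i, ∑ j, (Z j j - Z i j) = Z.trace - 1 := by
    intro i
    rw [Finset.sum_sub_distrib, hZrow, htr]
  -- the vector w = Z g
  set w : S → ℝ := fun i => ∑ j, Z i j * g j with hwdef
  have hM00 : (0:ℝ) ≤ M₀ := by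
    have s₀ : S := Classical.arbitrary S
    refine le_trans ?_ (Finset.le_sup' (fun s => ∑ a, π' s a * |Ab s a|)
      (Finset.mem_univ s₀))
    exact Finset.sum_nonneg fun a _ => mul_nonneg (hπ'0 s₀ a) (abs_nonneg _)
  have hgM : ∀ s, |g s| ≤ M₀ := by
    intro s
    refine le_trans ?_ (Finset.le_sup' (fun s => ∑ a, π' s a * |Ab s a|)
      (Finset.mem_univ s))
    refine le_trans (Finset.abs_sum_le_sum_abs _ _) ?_
    apply Finset.sum_le_sum
    intro a _
    rw [abs_mul, abs_of_nonneg (hπ'0 s a)]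
  have hwdiff : ∀ i k, |w i - w k| ≤ M₀ * (2 * (Z.trace - 1)) := by
    intro i k
    have h1 : w i - w k = ∑ j, (Z i j - Z k j) * g j := by
      simp only [hwdef]
      rw [← Finset.sum_sub_distrib]
      exact Finset.sum_congr rfl fun j _ => (sub_mul _ _ _).symm
    rw [h1]
    refine le_trans (Finset.abs_sum_le_sum_abs _ _) ?_
    have h2 : ∀ j, |(Z i j - Z k j) * g j| ≤ ((Z j j - Z i j) + (Z j j - Z k j)) * M₀ := by
      intro j
      rw [abs_mul]
      refine mul_le_mul ?_ (hgM j) (abs_nonneg _) ?_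
      · rw [abs_sub_le_iff]
        constructor
        · linarith [hmaxp j k, hmaxp j i]
        · linarith [hmaxp j i, hmaxp j k]
      · linarith [hmaxp j i, hmaxp j k]
    refine le_trans (Finset.sum_le_sum fun j _ => h2 j) ?_
    rw [← Finset.sum_mul]
    have h3 : ∑ j, ((Z j j - Z i j) + (Z j j - Z k j)) = 2 * (Z.trace - 1) := by
      rw [Finset.sum_add_distrib, hrowdiff i, hrowdiff k]
      ring
    rw [h3]
    ring_nf
    rfl
  -- the perturbation vector x
  set x : S → ℝ := fun j => (∑ s, dπ s * Pm' s j) - dπ j with hxdef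
  have hx0 : ∑ j, x j = 0 := by
    have h1 : ∑ j, x j = (∑ s, ∑ j, dπ s * Pm' s j) - ∑ j, dπ j := by
      simp only [hxdef]
      rw [Finset.sum_sub_distrib, Finset.sum_comm]
    have h2 : ∀ s, ∑ j, dπ s * Pm' s j = dπ s := fun s => by
      rw [← Finset.mul_sum, hPm'row, mul_one]
    have h3 : ∑ s, ∑ j, dπ s * Pm' s j = ∑ s, dπ s :=
      Finset.sum_congr rfl fun s _ => h2 s
    rw [h1, h3, hd1]
    norm_num
  have hx_alt : ∀ j, x j = ∑ s, dπ s * ∑ a, (π' s a - π s a) * P s a j := by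
    intro j
    simp only [hxdef]
    have h1 : dπ j = ∑ s, dπ s * ∑ a, π s a * P s a j := (hdstat j).symm
    rw [h1, ← Finset.sum_sub_distrib]
    apply Finset.sum_congr rfl
    intro s _
    rw [← mul_sub]
    congr 1
    rw [hPm'app, ← Finset.sum_sub_distrib]
    apply Finset.sum_congr rfl
    intro a _
    ring
  have hxabs : ∑ j, |x j| ≤ X := by
    have h1 : ∀ j, |x j| ≤ ∑ s, dπ s * ∑ a, |π' s a - π s a| * P s a j := by
      intro j
      rw [hx_alt j]
      refine le_trans (Finset.abs_sum_le_sum_abs _ _) ?_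
      apply Finset.sum_le_sum
      intro s _
      rw [abs_mul, abs_of_nonneg (le_of_lt (hd0 s))]
      apply mul_le_mul_of_nonneg_left _ (le_of_lt (hd0 s))
      refine le_trans (Finset.abs_sum_le_sum_abs _ _) ?_
      apply Finset.sum_le_sum
      intro a _
      rw [abs_mul, abs_of_nonneg (hP_nonneg s a j)]
    refine le_trans (Finset.sum_le_sum fun j _ => h1 j) ?_
    rw [hXdef, Finset.sum_comm]
    apply Finset.sum_le_sum
    intro s _
    rw [← Finset.mul_sum]
    apply mul_le_mul_of_nonneg_left _ (le_of_lt (hd0 s))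
    rw [Finset.sum_comm]
    apply le_of_eq
    apply Finset.sum_congr rfl
    intro a _
    rw [← Finset.mul_sum, hP_sum, mul_one]
  -- the key vector identity  d' - d = x Z
  have hvec : ∀ j, dπ' j - dπ j = ∑ i, x i * Z i j := by
    have hstep : ∀ k, ∑ i, (dπ' i - dπ i) * M' i k = x k := by
      intro k
      simp only [hM'app, mul_add, mul_sub, sub_mul]
      rw [Finset.sum_add_distrib, Finset.sum_sub_distrib, Finset.sum_sub_distrib,
        Finset.sum_sub_distrib, Finset.sum_sub_distrib]
      have e1 : ∑ i, (if i = k then (1:ℝ) else 0) * ((1:ℝ)) = 1 := by simp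
      have e2 : ∑ i, dπ' i * (if i = k then (1:ℝ) else 0) = dπ' k := by
        simp [Finset.sum_ite_eq']
      have e3 : ∑ i, dπ i * (if i = k then (1:ℝ) else 0) = dπ k := by
        simp [Finset.sum_ite_eq']
      rw [e2, e3, hstat', ← Finset.sum_mul, ← Finset.sum_mul, hd'1, hd1]
      rw [hxdef]
      ring
    intro j
    have h1 : dπ' j - dπ j = ∑ i, (dπ' i - dπ i) * (if i = j then (1:ℝ) else 0) := by
      simp [Finset.sum_ite_eq']
    rw [h1]
    calc ∑ i, (dπ' i - dπ i) * (if i = j then (1:ℝ) else 0)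
        = ∑ i, (dπ' i - dπ i) * ∑ k, M' i k * Z k j := by
          apply Finset.sum_congr rfl; intro i _; rw [hMZapp]
      _ = ∑ i, ∑ k, (dπ' i - dπ i) * M' i k * Z k j := by
          apply Finset.sum_congr rfl; intro i _
          rw [Finset.mul_sum]
          apply Finset.sum_congr rfl; intro k _; ring
      _ = ∑ k, ∑ i, (dπ' i - dπ i) * M' i k * Z k j := Finset.sum_comm
      _ = ∑ k, x k * Z k j := by
          apply Finset.sum_congr rfl; intro k _
          rw [← Finset.sum_mul, hstep]
  -- the performance difference identity:  ρπ' - ρπ = ∑ d' g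
  have hgsplit : ∀ s, g s = (∑ a, π' s a * r s a) - ρπ
      + (∑ s', Pm' s s' * Vb s') - Vb s := by
    intro s
    have h1 : ∀ a, π' s a * Ab s a
        = π' s a * r s a - π' s a * ρπ + π' s a * (∑ s', P s a s' * Vb s')
          - π' s a * Vb s := by
      intro a
      rw [hAdv, hBellman]
      ring
    simp only [hgdef, h1]
    rw [Finset.sum_sub_distrib, Finset.sum_add_distrib, Finset.sum_sub_distrib,
      ← Finset.sum_mul, ← Finset.sum_mul, hπ'1, one_mul, one_mul]
    have h2 : ∑ a, π' s a * ∑ s', P s a s' * Vb s' = ∑ s', Pm' s s' * Vb s' := by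
      simp only [Finset.mul_sum, hPm'app, Finset.sum_mul]
      rw [Finset.sum_comm]
      exact Finset.sum_congr rfl fun s' _ => Finset.sum_congr rfl fun a _ => by ring
    rw [h2]
  have hI1 : ∑ s, dπ' s * g s = ρπ' - ρπ := by
    have h1 : ∀ s, dπ' s * g s = dπ' s * (∑ a, π' s a * r s a) - dπ' s * ρπ
        + dπ' s * (∑ s', Pm' s s' * Vb s') - dπ' s * Vb s := by
      intro s; rw [hgsplit s]; ring
    simp only [h1]
    rw [Finset.sum_sub_distrib, Finset.sum_add_distrib, Finset.sum_sub_distrib,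
      ← Finset.sum_mul, hd'1, one_mul]
    have h2 : ∑ s, dπ' s * ∑ s', Pm' s s' * Vb s' = ∑ s, dπ' s * Vb s := by
      calc ∑ s, dπ' s * ∑ s', Pm' s s' * Vb s'
          = ∑ s', (∑ s, dπ' s * Pm' s s') * Vb s' := by
            simp only [Finset.mul_sum, Finset.sum_mul]
            rw [Finset.sum_comm]
            exact Finset.sum_congr rfl fun s' _ =>
              Finset.sum_congr rfl fun s _ => (mul_assoc _ _ _).symm
        _ = ∑ s', dπ' s' * Vb s' := by simp only [hstat']
    rw [h2, hρ']
    ring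
  have hI0 : ∑ s, dπ s * g s = ∑ s, dπ s * ∑ a, π' s a * Ab s a := by
    simp only [hgdef]
  -- the error term identity
  have hT : ρπ' - ρπ = (∑ s, dπ s * g s) + ∑ i, x i * w i := by
    have h1 : ∑ i, x i * w i = ∑ s, (dπ' s - dπ s) * g s := by
      calc ∑ i, x i * w i = ∑ i, ∑ j, x i * Z i j * g j := by
            refine Finset.sum_congr rfl fun i _ => ?_
            simp only [hwdef]
            rw [Finset.mul_sum]
            exact Finset.sum_congr rfl fun j _ => (mul_assoc _ _ _).symm
        _ = ∑ j, ∑ i, x i * Z i j * g j := Finset.sum_comm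
        _ = ∑ j, (dπ' j - dπ j) * g j := by
            refine Finset.sum_congr rfl fun j _ => ?_
            rw [hvec j, Finset.sum_mul]
    have h2 : ∑ s, (dπ' s - dπ s) * g s = (ρπ' - ρπ) - ∑ s, dπ s * g s := by
      simp only [sub_mul]
      rw [Finset.sum_sub_distrib, hI1]
    rw [h1, h2]
    ring
  -- midpoint bound
  obtain ⟨imax, -, hmax⟩ := Finset.exists_max_image Finset.univ w Finset.univ_nonempty
  obtain ⟨imin, -, hmin⟩ := Finset.exists_min_image Finset.univ w Finset.univ_nonempty
  have hwc : ∀ i, |w i - (w imax + w imin) / 2| ≤ M₀ * (Z.trace - 1) := by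
    intro i
    have h1 : w imax - w imin ≤ M₀ * (2 * (Z.trace - 1)) :=
      le_trans (le_abs_self _) (hwdiff imax imin)
    have h2 := hmax i (Finset.mem_univ i)
    have h3 := hmin i (Finset.mem_univ i)
    rw [abs_le]
    constructor <;> [linarith; linarith]
  have hX0 : (0:ℝ) ≤ X := by
    rw [hXdef]
    exact Finset.sum_nonneg fun s _ => mul_nonneg (le_of_lt (hd0 s))
      (Finset.sum_nonneg fun a _ => abs_nonneg _)
  have hTabs : |∑ i, x i * w i| ≤ X * (M₀ * (Z.trace - 1)) := by
    have h1 : ∑ i, x i * w i = ∑ i, x i * (w i - (w imax + w imin) / 2) := by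
      simp only [mul_sub]
      rw [Finset.sum_sub_distrib, ← Finset.sum_mul, hx0, zero_mul, sub_zero]
    rw [h1]
    refine le_trans (Finset.abs_sum_le_sum_abs _ _) ?_
    have h2 : ∀ i, |x i * (w i - (w imax + w imin) / 2)|
        ≤ |x i| * (M₀ * (Z.trace - 1)) := by
      intro i
      rw [abs_mul]
      exact mul_le_mul_of_nonneg_left (hwc i) (abs_nonneg _)
    refine le_trans (Finset.sum_le_sum fun i _ => h2 i) ?_
    rw [← Finset.sum_mul]
    exact mul_le_mul_of_nonneg_right hxabs (mul_nonneg hM00 hκpos)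
  have hκ : Z.trace ≤ κstar := by
    have h := hκ_ub π' dπ' ⟨hπ'0, hπ'1⟩ ⟨hd'0, hd'1, hd'stat⟩
    rw [kemeny] at h
    rw [hZdef]
    exact h
  have hfinal : |∑ i, x i * w i| ≤ ξ * X := by
    have h1 : X * (M₀ * (Z.trace - 1)) ≤ X * (M₀ * (κstar - 1)) := by
      apply mul_le_mul_of_nonneg_left _ hX0
      apply mul_le_mul_of_nonneg_left _ hM00
      linarith
    have h2 : X * (M₀ * (κstar - 1)) = ξ * X := by
      rw [hξ]; ring
    linarith [le_trans hTabs h1]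
  -- conclude
  have hhalf : ∑ s, dπ s * ((1 / 2) * ∑ a, |π' s a - π s a|) = (1/2) * X := by
    rw [hXdef, Finset.mul_sum]
    exact Finset.sum_congr rfl fun s _ => by ring
  rw [← hI0, hhalf]
  rw [abs_le] at hfinal
  constructor
  · have := hT
    have h := hfinal.1
    nlinarith [hT, hfinal.1]
  · nlinarith [hT, hfinal.2]
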